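/- arXiv:nlin/0501051 — 2 statements merged into one kernel-verified Lean document; each statement's English description precedes it below -/
import Mathlib

section
/- The series ₂φ₁(α₁, α₂; 0; q, z) satisfies the contiguity relation Φ(α₁,α₂/q,z) − Φ(α₁,α₂,z) = −(α₂z/q)(1−α₁)Φ(qα₁,α₂,z). -/
open scoped BigOperators

/-- The q-Pochhammer symbol (a;q)_n. -/
noncomputable def qPoch (a q : ℂ) (n : ℕ) : ℂ :=
  ∏ k ∈ Finset.range n, (1 - a * q ^ k)

/-- The basic hypergeometric series ₂φ₁(a, b; 0; q, z) with lower parameter 0. -/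
noncomputable def phi21 (a b q z : ℂ) : ℂ :=
  ∑' n : ℕ, qPoch a q n * qPoch b q n / qPoch q q n * z ^ n

lemma one_sub_qpow_ne (q : ℂ) (hq : ‖q‖ < 1) (k : ℕ) : (1 : ℂ) - q * q ^ k ≠ 0 := by
  intro h
  have h1 : q * q ^ k = 1 := by linear_combination -h
  have h2 : ‖q * q ^ k‖ < 1 := by
    rw [norm_mul, norm_pow]
    calc ‖q‖ * ‖q‖ ^ k ≤ ‖q‖ * 1 := by
          exact mul_le_mul_of_nonneg_left (pow_le_one₀ (norm_nonneg q) hq.le) (norm_nonneg q)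
      _ = ‖q‖ := mul_one _
      _ < 1 := hq
  rw [h1] at h2; simp at h2

lemma qPoch_q_ne_zero (q : ℂ) (hq : ‖q‖ < 1) (n : ℕ) : qPoch q q n ≠ 0 := by
  rw [qPoch]
  exact Finset.prod_ne_zero_iff.2 fun k _ => one_sub_qpow_ne q hq k

lemma geom_sum_le_div (r : ℝ) (h0 : 0 ≤ r) (h1 : r < 1) (n : ℕ) :
    ∑ k ∈ Finset.range n, r ^ k ≤ 1 / (1 - r) := by
  have hs : Summable (fun k : ℕ => r ^ k) := summable_geometric_of_lt_one h0 h1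
  calc ∑ k ∈ Finset.range n, r ^ k ≤ ∑' k : ℕ, r ^ k :=
        Summable.sum_le_tsum _ (fun k _ => pow_nonneg h0 k) hs
    _ = (1 - r)⁻¹ := tsum_geometric_of_lt_one h0 h1
    _ = 1 / (1 - r) := (one_div _).symm

lemma qPoch_norm_le (a q : ℂ) (hq : ‖q‖ < 1) (n : ℕ) :
    ‖qPoch a q n‖ ≤ Real.exp (‖a‖ / (1 - ‖q‖)) := by
  have h1r : (0:ℝ) < 1 - ‖q‖ := by linarith
  calc ‖qPoch a q n‖ = ∏ k ∈ Finset.range n, ‖1 - a * q ^ k‖ := by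
        rw [qPoch, norm_prod]
    _ ≤ ∏ k ∈ Finset.range n, Real.exp (‖a‖ * ‖q‖ ^ k) := by
        apply Finset.prod_le_prod (fun k _ => norm_nonneg _)
        intro k _
        calc ‖1 - a * q ^ k‖ ≤ ‖(1:ℂ)‖ + ‖a * q ^ k‖ := norm_sub_le _ _
          _ = ‖a‖ * ‖q‖ ^ k + 1 := by rw [norm_mul, norm_pow, norm_one]; ring
          _ ≤ Real.exp (‖a‖ * ‖q‖ ^ k) := Real.add_one_le_exp _
    _ = Real.exp (∑ k ∈ Finset.range n, ‖a‖ * ‖q‖ ^ k) := by rw [Real.exp_sum]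
    _ ≤ Real.exp (‖a‖ / (1 - ‖q‖)) := by
        apply Real.exp_le_exp.2
        rw [← Finset.mul_sum]
        calc ‖a‖ * ∑ k ∈ Finset.range n, ‖q‖ ^ k ≤ ‖a‖ * (1 / (1 - ‖q‖)) := by
              exact mul_le_mul_of_nonneg_left (geom_sum_le_div _ (norm_nonneg q) hq n) (norm_nonneg a)
          _ = ‖a‖ / (1 - ‖q‖) := by ring

lemma aux_exp_le (r x : ℝ) (hr : r < 1) (hx0 : 0 ≤ x) (hxr : x ≤ r) :
    Real.exp (-(x / (1 - r))) ≤ 1 - x := by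
  have h1x : (0:ℝ) < 1 - x := by linarith
  have h1r : (0:ℝ) < 1 - r := by linarith
  have key : 1 / (1 - x) ≤ Real.exp (x / (1 - r)) := by
    have h1 : x / (1 - x) + 1 ≤ Real.exp (x / (1 - x)) := Real.add_one_le_exp _
    have h2 : (1:ℝ) / (1 - x) = x / (1 - x) + 1 := by field_simp; ring
    have h3 : x / (1 - x) ≤ x / (1 - r) := by gcongr
    calc 1 / (1 - x) = x / (1 - x) + 1 := h2
      _ ≤ Real.exp (x / (1 - x)) := h1
      _ ≤ Real.exp (x / (1 - r)) := Real.exp_le_exp.2 h3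
  have hpos : (0:ℝ) < 1 / (1 - x) := by positivity
  rw [Real.exp_neg]
  calc (Real.exp (x / (1 - r)))⁻¹ ≤ (1 / (1 - x))⁻¹ := by gcongr
    _ = 1 - x := by field_simp

lemma qPoch_q_lb (q : ℂ) (hq : ‖q‖ < 1) (n : ℕ) :
    Real.exp (-(‖q‖ / (1 - ‖q‖) ^ 2)) ≤ ‖qPoch q q n‖ := by
  have h1r : (0:ℝ) < 1 - ‖q‖ := by linarith
  have hpow : ∀ k : ℕ, ‖q‖ ^ (k + 1) ≤ ‖q‖ := by
    intro k
    calc ‖q‖ ^ (k + 1) = ‖q‖ * ‖q‖ ^ k := by rw [pow_succ]; ring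
      _ ≤ ‖q‖ * 1 := mul_le_mul_of_nonneg_left (pow_le_one₀ (norm_nonneg q) hq.le) (norm_nonneg q)
      _ = ‖q‖ := mul_one _
  have hsum : ∑ k ∈ Finset.range n, ‖q‖ ^ (k + 1) ≤ ‖q‖ / (1 - ‖q‖) := by
    have he : (∑ k ∈ Finset.range n, ‖q‖ ^ (k + 1)) = ‖q‖ * ∑ k ∈ Finset.range n, ‖q‖ ^ k := by
      rw [Finset.mul_sum]; exact Finset.sum_congr rfl fun k _ => by rw [pow_succ]; ring
    have hg := geom_sum_le_div ‖q‖ (norm_nonneg q) hq n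
    rw [he]
    calc ‖q‖ * ∑ k ∈ Finset.range n, ‖q‖ ^ k ≤ ‖q‖ * (1 / (1 - ‖q‖)) :=
          mul_le_mul_of_nonneg_left hg (norm_nonneg q)
      _ = ‖q‖ / (1 - ‖q‖) := by ring
  calc Real.exp (-(‖q‖ / (1 - ‖q‖) ^ 2))
      ≤ Real.exp (-((∑ k ∈ Finset.range n, ‖q‖ ^ (k + 1)) / (1 - ‖q‖))) := by
        apply Real.exp_le_exp.2
        apply neg_le_neg
        calc (∑ k ∈ Finset.range n, ‖q‖ ^ (k + 1)) / (1 - ‖q‖)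
            ≤ (‖q‖ / (1 - ‖q‖)) / (1 - ‖q‖) := by gcongr
          _ = ‖q‖ / (1 - ‖q‖) ^ 2 := by rw [div_div, sq]
    _ = ∏ k ∈ Finset.range n, Real.exp (-(‖q‖ ^ (k + 1) / (1 - ‖q‖))) := by
        rw [← Real.exp_sum]
        congr 1
        rw [Finset.sum_neg_distrib, Finset.sum_div]
    _ ≤ ∏ k ∈ Finset.range n, (1 - ‖q‖ ^ (k + 1)) := by
        apply Finset.prod_le_prod (fun k _ => (Real.exp_pos _).le)
        intro k _
        exact aux_exp_le ‖q‖ _ hq (pow_nonneg (norm_nonneg q) _) (hpow k)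
    _ ≤ ‖qPoch q q n‖ := by
        rw [qPoch, norm_prod]
        apply Finset.prod_le_prod
        · intro k _
          have := hpow k
          have h2 : ‖q‖ ^ (k+1) < 1 := lt_of_le_of_lt (hpow k) hq
          linarith
        · intro k _
          calc 1 - ‖q‖ ^ (k + 1) = ‖(1:ℂ)‖ - ‖q * q ^ k‖ := by
                rw [norm_one, norm_mul, norm_pow, pow_succ]; ring_nf
            _ ≤ ‖1 - q * q ^ k‖ := norm_sub_norm_le _ _

lemma summable_term (a b q z : ℂ) (hq : ‖q‖ < 1) (hz : ‖z‖ < 1) :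
    Summable (fun n : ℕ => qPoch a q n * qPoch b q n / qPoch q q n * z ^ n) := by
  set C : ℝ := Real.exp (‖a‖ / (1 - ‖q‖)) * Real.exp (‖b‖ / (1 - ‖q‖)) *
      Real.exp (‖q‖ / (1 - ‖q‖) ^ 2) with hC
  apply Summable.of_norm
  apply Summable.of_nonneg_of_le (fun n => norm_nonneg _) ?_
    ((summable_geometric_of_lt_one (norm_nonneg z) hz).mul_left C)
  · intro n
    have hlb := qPoch_q_lb q hq n
    have hlbpos : (0:ℝ) < Real.exp (-(‖q‖ / (1 - ‖q‖) ^ 2)) := Real.exp_pos _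
    calc ‖qPoch a q n * qPoch b q n / qPoch q q n * z ^ n‖
        = ‖qPoch a q n‖ * ‖qPoch b q n‖ / ‖qPoch q q n‖ * ‖z‖ ^ n := by
          rw [norm_mul, norm_div, norm_mul, norm_pow]
      _ ≤ Real.exp (‖a‖ / (1 - ‖q‖)) * Real.exp (‖b‖ / (1 - ‖q‖)) /
            Real.exp (-(‖q‖ / (1 - ‖q‖) ^ 2)) * ‖z‖ ^ n := by
          gcongr
          · exact qPoch_norm_le a q hq n
          · exact qPoch_norm_le b q hq n
      _ = C * ‖z‖ ^ n := by
          rw [hC, Real.exp_neg]; field_simp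

lemma key_identity (q z α₁ α₂ : ℂ) (hq : ‖q‖ < 1) (hq0 : q ≠ 0) (n : ℕ) :
    qPoch α₁ q (n + 1) * qPoch (α₂ / q) q (n + 1) / qPoch q q (n + 1) * z ^ (n + 1)
      - qPoch α₁ q (n + 1) * qPoch α₂ q (n + 1) / qPoch q q (n + 1) * z ^ (n + 1)
    = -(α₂ * z / q) * (1 - α₁) *
        (qPoch (q * α₁) q n * qPoch α₂ q n / qPoch q q n * z ^ n) := by
  have e1 : qPoch α₁ q (n + 1) = (1 - α₁) * qPoch (q * α₁) q n := by
    rw [qPoch, Finset.prod_range_succ', qPoch]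
    simp only [pow_zero, mul_one]
    rw [mul_comm]
    congr 1
    exact Finset.prod_congr rfl fun k _ => by rw [pow_succ]; ring
  have e2 : qPoch (α₂ / q) q (n + 1) = (1 - α₂ / q) * qPoch α₂ q n := by
    rw [qPoch, Finset.prod_range_succ', qPoch]
    simp only [pow_zero, mul_one]
    rw [mul_comm]
    congr 1
    exact Finset.prod_congr rfl fun k _ => by rw [pow_succ]; field_simp
  have e3 : qPoch α₂ q (n + 1) = qPoch α₂ q n * (1 - α₂ * q ^ n) :=
    Finset.prod_range_succ _ _
  have e4 : qPoch q q (n + 1) = qPoch q q n * (1 - q * q ^ n) :=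
    Finset.prod_range_succ _ _
  have hQ : qPoch q q n ≠ 0 := qPoch_q_ne_zero q hq n
  have hF : (1 : ℂ) - q * q ^ n ≠ 0 := one_sub_qpow_ne q hq n
  rw [e1, e2, e3, e4]
  set_option maxHeartbeats 1000000 in
  field_simp
  set_option maxHeartbeats 1000000 in
  ring

/-- Contiguity relation Φ(α₁,α₂/q,z) − Φ(α₁,α₂,z) = −(α₂z/q)(1−α₁)Φ(qα₁,α₂,z). -/
theorem phi21_contiguity₂ (q z α₁ α₂ : ℂ) (hq : ‖q‖ < 1) (hq0 : q ≠ 0)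
    (hz : ‖z‖ < 1) :
    phi21 α₁ (α₂ / q) q z - phi21 α₁ α₂ q z
      = -(α₂ * z / q) * (1 - α₁) * phi21 (q * α₁) α₂ q z := by
  have hs1 := summable_term α₁ (α₂ / q) q z hq hz
  have hs2 := summable_term α₁ α₂ q z hq hz
  have hs3 := summable_term (q * α₁) α₂ q z hq hz
  rw [phi21, phi21, phi21, ← Summable.tsum_sub hs1 hs2]
  rw [Summable.tsum_eq_zero_add (hs1.sub hs2)]
  have h0 : qPoch α₁ q 0 * qPoch (α₂ / q) q 0 / qPoch q q 0 * z ^ 0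
      - qPoch α₁ q 0 * qPoch α₂ q 0 / qPoch q q 0 * z ^ 0 = 0 := by
    simp [qPoch]
  rw [h0, zero_add]
  calc (∑' n : ℕ, (qPoch α₁ q (n + 1) * qPoch (α₂ / q) q (n + 1) / qPoch q q (n + 1) * z ^ (n + 1)
          - qPoch α₁ q (n + 1) * qPoch α₂ q (n + 1) / qPoch q q (n + 1) * z ^ (n + 1)))
      = ∑' n : ℕ, -(α₂ * z / q) * (1 - α₁) *
          (qPoch (q * α₁) q n * qPoch α₂ q n / qPoch q q n * z ^ n) :=
        tsum_congr fun n => key_identity q z α₁ α₂ hq hq0 n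
    _ = -(α₂ * z / q) * (1 - α₁) *
          ∑' n : ℕ, qPoch (q * α₁) q n * qPoch α₂ q n / qPoch q q n * z ^ n := by
        rw [tsum_mul_left]
end

section
/- The series Ψ(a,z) = ₁φ₁(a; 0; q², z) satisfies the contiguity relation Ψ(a,z) − aΨ(a,q²z) = (1−a)Ψ(q²a,z). -/
open scoped BigOperators
open Filter

/-- Ψ(a,z) = ₁φ₁(a; 0; q², z). -/
noncomputable def psi11 (q a z : ℂ) : ℂ :=
  ∑' n : ℕ, qPoch a (q ^ 2) n / qPoch (q ^ 2) (q ^ 2) n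
    * (-1) ^ n * q ^ (n * (n - 1)) * z ^ n

lemma one_sub_ne (t : ℂ) (ht : ‖t‖ < 1) : (1 : ℂ) - t ≠ 0 := by
  intro h
  rw [sub_eq_zero] at h
  rw [← h] at ht
  simp at ht

lemma qPochQ_ne (q : ℂ) (hq : ‖q‖ < 1) (n : ℕ) : qPoch (q ^ 2) (q ^ 2) n ≠ 0 := by
  apply Finset.prod_ne_zero_iff.mpr
  intro k _
  apply one_sub_ne
  calc ‖q ^ 2 * (q ^ 2) ^ k‖ = ‖q‖ ^ (2 + 2 * k) := by
        rw [norm_mul, norm_pow, norm_pow, norm_pow, ← pow_mul, ← pow_add]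
    _ < 1 := pow_lt_one₀ (norm_nonneg q) hq (by omega)

lemma qPoch_succ (a Q : ℂ) (n : ℕ) :
    qPoch a Q (n + 1) = qPoch a Q n * (1 - a * Q ^ n) :=
  Finset.prod_range_succ _ _

lemma qPoch_key (a Q : ℂ) (n : ℕ) :
    qPoch a Q n * (1 - a * Q ^ n) = (1 - a) * qPoch (Q * a) Q n := by
  rw [← qPoch_succ]
  rw [qPoch, Finset.prod_range_succ']
  rw [mul_comm]
  congr 1
  · simp
  · unfold qPoch
    apply Finset.prod_congr rfl
    intro k _
    ring

lemma exp_arith (n : ℕ) : (n + 1) * n = n * (n - 1) + 2 * n := by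
  rcases n with _ | m
  · rfl
  · simp only [Nat.add_sub_cancel]
    ring

lemma summable_psi (q a z : ℂ) (hq : ‖q‖ < 1) :
    Summable (fun n : ℕ => qPoch a (q ^ 2) n / qPoch (q ^ 2) (q ^ 2) n
      * (-1) ^ n * q ^ (n * (n - 1)) * z ^ n) := by
  set Q := q ^ 2 with hQdef
  set f : ℕ → ℂ := fun n => qPoch a Q n / qPoch Q Q n * (-1) ^ n * q ^ (n * (n - 1)) * z ^ n
    with hf
  set w : ℕ → ℂ := fun n => -((1 - a * Q ^ n) / (1 - Q * Q ^ n) * Q ^ n * z) with hwdef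
  have hQnorm : ‖Q‖ < 1 := by
    rw [hQdef, norm_pow]
    calc ‖q‖ ^ 2 ≤ ‖q‖ := by nlinarith [norm_nonneg q]
      _ < 1 := hq
  have hQn : Tendsto (fun n : ℕ => Q ^ n) atTop (nhds 0) :=
    tendsto_pow_atTop_nhds_zero_of_norm_lt_one hQnorm
  have hstep : ∀ n : ℕ, f (n + 1) = f n * w n := by
    intro n
    have hD : qPoch Q Q n ≠ 0 := qPochQ_ne q hq n
    have hfac : (1 : ℂ) - Q * Q ^ n ≠ 0 := by
      apply one_sub_ne
      have h1 : ‖Q‖ ^ n ≤ 1 := pow_le_one₀ (norm_nonneg _) hQnorm.le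
      calc ‖Q * Q ^ n‖ = ‖Q‖ * ‖Q‖ ^ n := by simp [hQdef, norm_mul, norm_pow]
        _ < 1 := by nlinarith [norm_nonneg Q]
    simp only [hf, hwdef]
    rw [qPoch_succ, qPoch_succ]
    simp only [Nat.add_sub_cancel]
    rw [exp_arith, pow_add q (n * (n - 1)) (2 * n), pow_mul q 2 n, ← hQdef]
    field_simp
    ring
  have hw0 : Tendsto w atTop (nhds 0) := by
    have h1 : Tendsto (fun n : ℕ => (1 : ℂ) - a * Q ^ n) atTop (nhds 1) := by
      simpa using Tendsto.sub (tendsto_const_nhds) (hQn.const_mul a)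
    have h2 : Tendsto (fun n : ℕ => (1 : ℂ) - Q * Q ^ n) atTop (nhds 1) := by
      simpa using Tendsto.sub (tendsto_const_nhds) (hQn.const_mul Q)
    have h3 := (((h1.div h2 one_ne_zero).mul hQn).mul_const z).neg
    simpa using h3
  have hsmall : ∀ᶠ n in atTop, ‖w n‖ ≤ 1 / 2 := by
    have hn := hw0.norm
    simp only [norm_zero] at hn
    exact hn.eventually_le_const (by norm_num : (0:ℝ) < 1/2)
  apply summable_of_ratio_norm_eventually_le (r := 1/2) (by norm_num)
  filter_upwards [hsmall] with n hn
  rw [hstep n, norm_mul]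
  calc ‖f n‖ * ‖w n‖ ≤ ‖f n‖ * (1/2) := mul_le_mul_of_nonneg_left hn (norm_nonneg _)
    _ = 1/2 * ‖f n‖ := by ring

/-- Contiguity relation Ψ(a,z) − aΨ(a,q²z) = (1−a)Ψ(q²a,z). -/
theorem psi11_contiguity₁ (q a z : ℂ) (hq : ‖q‖ < 1) :
    psi11 q a z - a * psi11 q a (q ^ 2 * z) = (1 - a) * psi11 q (q ^ 2 * a) z := by
  have hf := summable_psi q a z hq
  have hg := summable_psi q a (q ^ 2 * z) hq
  unfold psi11
  rw [← tsum_mul_left (a := a), ← tsum_mul_left (a := 1 - a),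
    ← Summable.tsum_sub hf (hg.mul_left a)]
  apply tsum_congr
  intro n
  have hD : qPoch (q ^ 2) (q ^ 2) n ≠ 0 := qPochQ_ne q hq n
  have key := qPoch_key a (q ^ 2) n
  have hzp : (q ^ 2 * z) ^ n = (q ^ 2) ^ n * z ^ n := mul_pow _ _ _
  rw [hzp]
  field_simp
  linear_combination (q ^ (n * (n - 1)) * z ^ n) * key
end
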